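/- Let {X,N} and {X',N'} be two solutions of Tsirelson's equation with the same noise law μ. If X_k and X'_k have the same law on S for every k ∈ -ℕ, then the two solutions are identical in law, i.e., the laws of (X,N) and (X',N') on S^{-ℕ} × Σ^{-ℕ} coincide. -/

import Mathlib

open MeasureTheory ProbabilityTheory Filter Topology
open scoped NNReal ENNReal

universe u v w w₂

noncomputable section

/-- The sub-σ-field generated by the process `Y` from index `k` on; since index `j : ℕ`
stands for time `-j`, this is the σ-field of the past `σ(Y_j : j ≤ -k)`. -/
def past {Ω α : Type*} [MeasurableSpace α] (Y : ℕ → Ω → α) (k : ℕ) : MeasurableSpace Ω :=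
  ⨆ j ≥ k, MeasurableSpace.comap (Y j) inferInstance

/-- A solution of Tsirelson's equation with noise law `μ`.  The index `k : ℕ` stands for the
time `-k ∈ -ℕ`, so that time `k - 1` corresponds to index `k + 1`. -/
structure IsSolution {Ω S G : Type*} [MeasurableSpace Ω] [MeasurableSpace S] [MeasurableSpace G]
    [SMul G S] (P : Measure Ω) (μ : ℕ → Measure G)
    (X : ℕ → Ω → S) (N : ℕ → Ω → G) : Prop where
  measurable_X : ∀ k, Measurable (X k)
  measurable_N : ∀ k, Measurable (N k)
  eqn : ∀ k, X k =ᵐ[P] fun ω => N k ω • X (k + 1) ω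
  indep : ∀ k, Indep (MeasurableSpace.comap (N k) inferInstance)
      (past X (k + 1) ⊔ past N (k + 1)) P
  law_N : ∀ k, P.map (N k) = μ k

/-- The joint law of `(X, N)` on the path space `S^{-ℕ} × Σ^{-ℕ}`. -/
def jointLaw {Ω S G : Type*} [MeasurableSpace Ω] [MeasurableSpace S] [MeasurableSpace G]
    (P : Measure Ω) (X : ℕ → Ω → S) (N : ℕ → Ω → G) : Measure ((ℕ → S) × (ℕ → G)) :=
  P.map fun ω => (fun k => X k ω, fun k => N k ω)

/-- A solution is strong if each `X k` is a.s. equal to a `past N k`-measurable function,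
i.e. `X k` is measurable for the `P`-completion of `σ(N_j : j ≤ -k)`. -/
def IsStrong {Ω S G : Type*} [MeasurableSpace Ω] [MeasurableSpace S] [MeasurableSpace G]
    (P : Measure Ω) (X : ℕ → Ω → S) (N : ℕ → Ω → G) : Prop :=
  ∀ k, ∃ Y : Ω → S, Measurable[past N k] Y ∧ X k =ᵐ[P] Y

/-- Triviality of the tail σ-field `⨅ k, m k`. -/
def TailTrivial {Ω : Type*} [MeasurableSpace Ω] (P : Measure Ω)
    (m : ℕ → MeasurableSpace Ω) : Prop :=
  ∀ A : Set Ω, MeasurableSet[⨅ k, m k] A → P A = 0 ∨ P A = 1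

/-- Convolution `μ * ν` of a measure on the acting semigroup with a measure on the space:
the pushforward of `μ ⊗ ν` under the action map. -/
def conv {G S : Type*} [MeasurableSpace G] [MeasurableSpace S] [SMul G S]
    (μ : Measure G) (ν : Measure S) : Measure S :=
  (μ.prod ν).map fun p => p.1 • p.2

/-- Convolution of two measures on the semigroup. -/
def convG {G : Type*} [MeasurableSpace G] [Mul G] (μ ν : Measure G) : Measure G :=
  (μ.prod ν).map fun p => p.1 * p.2

/-- `prodN N n j = N_n · N_{n+1} · ⋯ · N_{n+j}`; in the time-indexing of the paper (index `m`
is time `-m`) this is `N_{k,l}` with `k = -n` and `l = -(n+j)-1 → -∞` as `j → ∞`. -/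
def prodN {Ω G : Type*} [Mul G] (N : ℕ → Ω → G) (n : ℕ) : ℕ → Ω → G
  | 0 => N n
  | j + 1 => fun ω => prodN N n j ω * N (n + j + 1) ω

/-- `convIter μ n j = μ_n * μ_{n+1} * ⋯ * μ_{n+j}`, the law analogue of `prodN`. -/
def convIter {G : Type*} [MeasurableSpace G] [Mul G] (μ : ℕ → Measure G) (n : ℕ) :
    ℕ → Measure G
  | 0 => μ n
  | j + 1 => convG (convIter μ n j) (μ (n + j + 1))

/-- `sigPow G n` is `Σ^{n+1}`, the set of products of `n+1` elements of `Σ = G`. -/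
def sigPow (G : Type*) [Mul G] : ℕ → Set G
  | 0 => Set.univ
  | n + 1 => Set.image2 (· * ·) (sigPow G n) Set.univ

/-- Two sub-σ-fields are equal up to `P`-null sets. -/
def EqModNull {Ω : Type*} [MeasurableSpace Ω] (P : Measure Ω)
    (m₁ m₂ : MeasurableSpace Ω) : Prop :=
  (∀ A, MeasurableSet[m₁] A → ∃ B, MeasurableSet[m₂] B ∧ P (symmDiff A B) = 0) ∧
  (∀ B, MeasurableSet[m₂] B → ∃ A, MeasurableSet[m₁] A ∧ P (symmDiff A B) = 0)

end

section Context

variable {S : Type u} {G : Type v}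
  [TopologicalSpace S] [CompactSpace S] [TopologicalSpace.MetrizableSpace S]
  [SecondCountableTopology S] [MeasurableSpace S] [BorelSpace S]
  [TopologicalSpace G] [CompactSpace G] [TopologicalSpace.MetrizableSpace G]
  [SecondCountableTopology G] [MeasurableSpace G] [BorelSpace G]
  [Semigroup G] [ContinuousMul G]
  [SMul G S] [ContinuousSMul G S] [IsScalarTower G G S]

end Context

section AuxGeneral

open MeasurableSpace

/-- Plain-sequence version of `prodN`. -/
def pseq {G : Type*} [Mul G] (g : ℕ → G) (a : ℕ) : ℕ → G
  | 0 => g a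
  | m + 1 => pseq g a m * g (a + m + 1)

lemma pseq_congr {G : Type*} [Mul G] {g₁ g₂ : ℕ → G} (a : ℕ) :
    ∀ m, (∀ i, a ≤ i → i ≤ a + m → g₁ i = g₂ i) → pseq g₁ a m = pseq g₂ a m
  | 0, h => h a le_rfl (by omega)
  | m + 1, h => by
    show pseq g₁ a m * g₁ (a + m + 1) = pseq g₂ a m * g₂ (a + m + 1)
    rw [pseq_congr a m fun i h1 h2 => h i h1 (by omega), h (a + m + 1) (by omega) (by omega)]

lemma prodN_eq_pseq {Ω G : Type*} [Mul G] (N : ℕ → Ω → G) (a : ℕ) (ω : Ω) :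
    ∀ m, prodN N a m ω = pseq (fun i => N i ω) a m
  | 0 => rfl
  | m + 1 => by
    show prodN N a m ω * N (a + m + 1) ω = pseq (fun i => N i ω) a m * N (a + m + 1) ω
    rw [prodN_eq_pseq N a ω m]

lemma measurable_pseq {α G : Type*} [MeasurableSpace α] [MeasurableSpace G] [Mul G]
    [MeasurableMul₂ G] {g : α → ℕ → G} (hg : ∀ i, Measurable fun x => g x i) (a : ℕ) :
    ∀ m, Measurable fun x => pseq (g x) a m
  | 0 => hg a
  | m + 1 => (measurable_pseq hg a m).mul (hg (a + m + 1))

lemma measurable_pi_lambda' {α δ : Type*} {π : δ → Type*} (m : MeasurableSpace α)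
    [∀ a, MeasurableSpace (π a)] (f : α → ∀ a, π a)
    (hf : ∀ a, @Measurable _ _ m _ fun c => f c a) : @Measurable _ _ m _ f := by
  letI := m
  exact measurable_pi_lambda f hf

lemma comap_le_past {Ω α : Type*} [MeasurableSpace α] (Y : ℕ → Ω → α) {k j : ℕ} (h : k ≤ j) :
    MeasurableSpace.comap (Y j) inferInstance ≤ past Y k :=
  le_iSup₂ (f := fun j (_ : j ≥ k) => MeasurableSpace.comap (Y j) inferInstance) j h

lemma past_mono {Ω α : Type*} [MeasurableSpace α] (Y : ℕ → Ω → α) {k l : ℕ} (h : k ≤ l) :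
    past Y l ≤ past Y k :=
  iSup₂_le fun j hj => comap_le_past Y (le_trans h hj)

lemma past_le {Ω α : Type*} [MeasurableSpace Ω] [MeasurableSpace α] {Y : ℕ → Ω → α}
    (hY : ∀ j, Measurable (Y j)) (k : ℕ) : past Y k ≤ ‹MeasurableSpace Ω› :=
  iSup₂_le fun j _ => measurable_iff_comap_le.mp (hY j)

lemma generateFrom_inter_sup {Ω : Type*} (m₁ m₂ : MeasurableSpace Ω) :
    MeasurableSpace.generateFrom
      {s | ∃ a b, MeasurableSet[m₁] a ∧ MeasurableSet[m₂] b ∧ s = a ∩ b} = m₁ ⊔ m₂ := by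
  apply le_antisymm
  · apply MeasurableSpace.generateFrom_le
    rintro s ⟨a, b, ha, hb, rfl⟩
    exact ((le_sup_left : m₁ ≤ m₁ ⊔ m₂) a ha).inter ((le_sup_right : m₂ ≤ m₁ ⊔ m₂) b hb)
  · refine sup_le (fun s hs => ?_) (fun s hs => ?_)
    · exact measurableSet_generateFrom ⟨s, Set.univ, hs, MeasurableSet.univ,
        (Set.inter_univ s).symm⟩
    · exact measurableSet_generateFrom ⟨Set.univ, s, MeasurableSet.univ, hs,
        (Set.univ_inter s).symm⟩

open ProbabilityTheory in
lemma indep_sup_of {Ω : Type*} {mΩ : MeasurableSpace Ω} {P : Measure Ω} [IsProbabilityMeasure P]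
    {m₁ m₂ m₃ : MeasurableSpace Ω} (h1Ω : m₁ ≤ mΩ) (h2Ω : m₂ ≤ mΩ) (h3Ω : m₃ ≤ mΩ)
    (h1 : Indep m₁ (m₂ ⊔ m₃) P) (h2 : Indep m₂ m₃ P) : Indep (m₁ ⊔ m₂) m₃ P := by
  refine IndepSets.indep (sup_le h1Ω h2Ω) h3Ω ?_ (@isPiSystem_measurableSet Ω m₃)
    (generateFrom_inter_sup m₁ m₂).symm generateFrom_measurableSet.symm ?_
  · rintro s ⟨a, b, ha, hb, rfl⟩ t ⟨a', b', ha', hb', rfl⟩ -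
    exact ⟨a ∩ a', b ∩ b', ha.inter ha', hb.inter hb', by ac_rfl⟩
  · rw [IndepSets_iff]
    rintro t1 t2 ⟨a, b, ha, hb, rfl⟩ ht2
    have hI1 := (Indep_iff _ _ _).mp h1
    have hI2 := (Indep_iff _ _ _).mp h2
    have hb' : MeasurableSet[m₂ ⊔ m₃] b := (le_sup_left : m₂ ≤ m₂ ⊔ m₃) b hb
    have ht2' : MeasurableSet[m₂ ⊔ m₃] t2 := (le_sup_right : m₃ ≤ m₂ ⊔ m₃) t2 ht2
    have e1 : P (a ∩ b ∩ t2) = P a * P (b ∩ t2) := by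
      rw [Set.inter_assoc]
      exact hI1 a (b ∩ t2) ha (hb'.inter ht2')
    rw [e1, hI2 b t2 hb ht2, hI1 a b ha hb', mul_assoc]

end AuxGeneral

section AuxTsirelson

open MeasurableSpace

variable {S : Type u} {G : Type v}
  [TopologicalSpace S] [CompactSpace S] [TopologicalSpace.MetrizableSpace S]
  [SecondCountableTopology S] [MeasurableSpace S] [BorelSpace S]
  [TopologicalSpace G] [CompactSpace G] [TopologicalSpace.MetrizableSpace G]
  [SecondCountableTopology G] [MeasurableSpace G] [BorelSpace G]
  [Semigroup G] [ContinuousMul G]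
  [SMul G S] [ContinuousSMul G S] [IsScalarTower G G S]

/-- The finite-dimensional reconstruction map:
`(x, g) ↦ ((j ↦ (g_j ⋯ g_{n-1}) • x), g)`. -/
def Fmap (d : G) (n : ℕ) : S × (Fin n → G) → (Fin n → S) × (Fin n → G) :=
  fun p => (fun j => pseq (fun i => if h : i < n then p.2 ⟨i, h⟩ else d) j (n - 1 - j) • p.1, p.2)

lemma measurable_Fmap (d : G) (n : ℕ) : Measurable (Fmap (S := S) d n) := by
  apply Measurable.prodMk _ measurable_snd
  apply measurable_pi_lambda
  intro j
  have hg : ∀ i : ℕ, Measurable fun p : S × (Fin n → G) =>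
      (if h : i < n then p.2 ⟨i, h⟩ else d) := by
    intro i
    by_cases h : i < n
    · simp only [h, dif_pos]
      exact (measurable_pi_apply _).comp measurable_snd
    · simp only [h, dif_neg, not_false_iff]
      exact measurable_const
  exact (measurable_pseq hg j (n - 1 - j)).smul measurable_fst

/-- The snoc map assembling `((x, g_n), (g_0, …, g_{n-1}))` into `(x, (g_0, …, g_n))`. -/
def snocMap (n : ℕ) : (S × G) × (Fin n → G) → S × (Fin (n + 1) → G) :=
  fun p => (p.1.1, Fin.snoc p.2 p.1.2)

lemma measurable_snocMap (n : ℕ) : Measurable (snocMap (S := S) (G := G) n) := by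
  apply Measurable.prodMk (measurable_fst.comp measurable_fst)
  apply measurable_pi_lambda
  intro i
  refine Fin.lastCases ?_ (fun j => ?_) i
  · simpa [Fin.snoc_last, Function.comp_def] using (measurable_snd.comp measurable_fst)
  · simpa [Fin.snoc_castSucc, Function.comp_def] using (measurable_pi_apply j).comp measurable_snd

variable {Ω : Type*} [MeasurableSpace Ω] {P : Measure Ω} [IsProbabilityMeasure P]
  {μ : ℕ → Measure G} {X : ℕ → Ω → S} {N : ℕ → Ω → G}

lemma IsSolution.chain (hsol : IsSolution P μ X N) :
    ∀ (m j : ℕ), X j =ᵐ[P] fun ω => prodN N j m ω • X (j + m + 1) ω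
  | 0, j => hsol.eqn j
  | m + 1, j => by
    filter_upwards [hsol.chain m j, hsol.eqn (j + m + 1)] with ω h1 h2
    calc X j ω = prodN N j m ω • X (j + m + 1) ω := h1
      _ = prodN N j m ω • (N (j + m + 1) ω • X (j + m + 2) ω) := by rw [h2]
      _ = (prodN N j m ω * N (j + m + 1) ω) • X (j + m + 2) ω := by
          rw [← smul_eq_mul, smul_assoc]
      _ = prodN N j (m + 1) ω • X (j + (m + 1) + 1) ω := rfl

lemma IsSolution.measurable_Nvec (hsol : IsSolution P μ X N) (n : ℕ) :
    Measurable fun ω (i : Fin n) => N i ω :=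
  measurable_pi_lambda _ fun i => hsol.measurable_N i

lemma IsSolution.indep_Nvec (hsol : IsSolution P μ X N) :
    ∀ n, Indep (MeasurableSpace.comap (fun ω (i : Fin n) => N i ω) inferInstance)
      (past X n ⊔ past N n) P := by
  intro n
  induction n with
  | zero =>
    have h0 : (MeasurableSpace.comap (fun ω (i : Fin 0) => N i ω) inferInstance
        : MeasurableSpace Ω) = ⊥ := by
      refine le_antisymm ?_ bot_le
      rintro s ⟨A, -, rfl⟩
      rcases A.eq_empty_or_nonempty with rfl | hA
      · simp
      · rw [hA.eq_univ]; simp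
    rw [h0]
    exact indep_bot_left _
  | succ n ih =>
    have hXΩ : past X n ⊔ past N n ≤ ‹MeasurableSpace Ω› :=
      sup_le (past_le hsol.measurable_X n) (past_le hsol.measurable_N n)
    have hM' : past X (n + 1) ⊔ past N (n + 1) ≤ past X n ⊔ past N n :=
      sup_le (le_trans (past_mono X n.le_succ) le_sup_left)
        (le_trans (past_mono N n.le_succ) le_sup_right)
    have h1 : Indep (MeasurableSpace.comap (fun ω (i : Fin n) => N i ω) inferInstance)
        (MeasurableSpace.comap (N n) inferInstance ⊔ (past X (n + 1) ⊔ past N (n + 1))) P := by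
      refine indep_of_indep_of_le_right ih (sup_le ?_ hM')
      exact le_trans (comap_le_past N le_rfl) le_sup_right
    have key : Indep ((MeasurableSpace.comap (fun ω (i : Fin n) => N i ω) inferInstance : MeasurableSpace Ω)
        ⊔ MeasurableSpace.comap (N n) inferInstance) (past X (n + 1) ⊔ past N (n + 1)) P :=
      indep_sup_of (measurable_iff_comap_le.mp (hsol.measurable_Nvec n))
        (measurable_iff_comap_le.mp (hsol.measurable_N n))
        (le_trans hM' hXΩ) h1 (hsol.indep n)
    refine indep_of_indep_of_le_left key ?_
    refine measurable_iff_comap_le.mp ?_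
    refine measurable_pi_lambda' _ _ ?_
    intro i
    rcases Nat.lt_succ_iff_lt_or_eq.mp i.isLt with h | h
    · have hle : (MeasurableSpace.comap (fun ω (i : Fin n) => N i ω) inferInstance
          : MeasurableSpace Ω) ≤
          MeasurableSpace.comap (fun ω (i : Fin n) => N i ω) inferInstance ⊔
            MeasurableSpace.comap (N n) inferInstance := le_sup_left
      exact (measurable_pi_apply (X := fun _ : Fin n => G) (⟨(i : ℕ), h⟩ : Fin n)).comp
        (measurable_iff_comap_le.mpr hle)
    · have hle : (MeasurableSpace.comap (N n) inferInstance : MeasurableSpace Ω) ≤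
          MeasurableSpace.comap (fun ω (i : Fin n) => N i ω) inferInstance ⊔
            MeasurableSpace.comap (N n) inferInstance := le_sup_right
      rw [h]
      exact measurable_iff_comap_le.mpr hle

lemma IsSolution.law_pair (hsol : IsSolution P μ X N) (n : ℕ) :
    P.map (fun ω => (X (n + 1) ω, N n ω)) = (P.map (X (n + 1))).prod (μ n) := by
  have hIndep : IndepFun (X (n + 1)) (N n) P := by
    have := indep_of_indep_of_le_right (hsol.indep n)
      (le_trans (comap_le_past X le_rfl) le_sup_left)
    exact this.symm
  rw [(indepFun_iff_map_prod_eq_prod_map_map (hsol.measurable_X (n + 1)).aemeasurable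
    (hsol.measurable_N n).aemeasurable).mp hIndep, hsol.law_N n]

lemma IsSolution.law_W_succ (hsol : IsSolution P μ X N) (n : ℕ) :
    P.map (fun ω => (X (n + 1) ω, fun i : Fin (n + 1) => N i ω)) =
      (((P.map (X (n + 1))).prod (μ n)).prod
        (P.map (fun ω (i : Fin n) => N i ω))).map (snocMap n) := by
  have hV : Measurable fun ω => (X (n + 1) ω, N n ω) :=
    (hsol.measurable_X (n + 1)).prodMk (hsol.measurable_N n)
  have hfun : (fun ω => (X (n + 1) ω, fun i : Fin (n + 1) => N i ω)) =
      snocMap n ∘ fun ω => ((X (n + 1) ω, N n ω), fun i : Fin n => N i ω) := by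
    funext ω
    refine Prod.ext rfl ?_
    funext i
    refine Fin.lastCases ?_ (fun j => ?_) i
    · simp [snocMap, Fin.snoc_last]
    · simp [snocMap, Fin.snoc_castSucc]
  have hIndep : IndepFun (fun ω => (X (n + 1) ω, N n ω)) (fun ω (i : Fin n) => N i ω) P := by
    have hle : MeasurableSpace.comap (fun ω => (X (n + 1) ω, N n ω)) inferInstance ≤
        past X n ⊔ past N n := by
      refine measurable_iff_comap_le.mp (Measurable.prodMk ?_ ?_)
      · exact measurable_iff_comap_le.mpr
          (le_trans (comap_le_past X n.le_succ) le_sup_left)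
      · exact measurable_iff_comap_le.mpr
          (le_trans (comap_le_past N le_rfl) le_sup_right)
    exact (indep_of_indep_of_le_right (hsol.indep_Nvec n) hle).symm
  have hmapPair : P.map (fun ω => ((X (n + 1) ω, N n ω), fun i : Fin n => N i ω)) =
      (P.map (fun ω => (X (n + 1) ω, N n ω))).prod (P.map (fun ω (i : Fin n) => N i ω)) :=
    (indepFun_iff_map_prod_eq_prod_map_map hV.aemeasurable
      (hsol.measurable_Nvec n).aemeasurable).mp hIndep
  rw [hfun, ← Measure.map_map (measurable_snocMap n) (hV.prodMk (hsol.measurable_Nvec n)),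
    hmapPair, hsol.law_pair n]

lemma IsSolution.law_Wfull (hsol : IsSolution P μ X N) (d : G) (n : ℕ) :
    P.map (fun ω => (fun j : Fin n => X j ω, fun j : Fin n => N j ω)) =
      (P.map (fun ω => (X n ω, fun i : Fin n => N i ω))).map (Fmap d n) := by
  have hall : ∀ᵐ ω ∂P, ∀ j : Fin n,
      X j ω = pseq (fun i => if h : i < n then N i ω else d) j (n - 1 - j) • X n ω := by
    rw [ae_all_iff]
    intro j
    have hj := j.isLt
    have hidx : (j : ℕ) + (n - 1 - (j : ℕ)) + 1 = n := by omega
    have hch := hsol.chain (n - 1 - (j : ℕ)) (j : ℕ)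
    rw [hidx] at hch
    filter_upwards [hch] with ω hω
    rw [hω, prodN_eq_pseq]
    congr 1
    exact pseq_congr (j : ℕ) (n - 1 - (j : ℕ))
      (fun i h1 h2 => (dif_pos (show i < n by omega)
        (t := fun _ => N i ω) (e := fun _ => d)).symm)
  have hae : (fun ω => (fun j : Fin n => X j ω, fun j : Fin n => N j ω)) =ᵐ[P]
      (Fmap d n) ∘ (fun ω => (X n ω, fun i : Fin n => N i ω)) := by
    filter_upwards [hall] with ω hω
    refine Prod.ext ?_ rfl
    funext j
    exact hω j
  rw [Measure.map_congr hae, ← Measure.map_map (measurable_Fmap d n)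
    ((hsol.measurable_X n).prodMk (hsol.measurable_Nvec n))]

end AuxTsirelson

section PathSpace

variable {α : Type*} {β : Type*} [MeasurableSpace α] [MeasurableSpace β]

/-- Restriction of a pair of paths to its first `n` coordinates. -/
def resMap (α β : Type*) (n : ℕ) : (ℕ → α) × (ℕ → β) → (Fin n → α) × (Fin n → β) :=
  fun q => (fun j => q.1 j, fun j => q.2 j)

lemma measurable_resMap (n : ℕ) : Measurable (resMap α β n) := by
  unfold resMap
  apply Measurable.prodMk
  · exact measurable_pi_lambda (fun (q : (ℕ → α) × (ℕ → β)) (j : Fin n) => q.1 (j : ℕ))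
      fun j => (measurable_pi_apply (X := fun _ : ℕ => α) ((j : ℕ))).comp measurable_fst
  · exact measurable_pi_lambda (fun (q : (ℕ → α) × (ℕ → β)) (j : Fin n) => q.2 (j : ℕ))
      fun j => (measurable_pi_apply (X := fun _ : ℕ => β) ((j : ℕ))).comp measurable_snd

/-- Truncation between finite-dimensional path spaces. -/
def truncMap (α β : Type*) {n k : ℕ} (h : n ≤ k) :
    (Fin k → α) × (Fin k → β) → (Fin n → α) × (Fin n → β) :=
  fun p => (fun j => p.1 (Fin.castLE h j), fun j => p.2 (Fin.castLE h j))

lemma measurable_truncMap {n k : ℕ} (h : n ≤ k) : Measurable (truncMap α β h) := by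
  unfold truncMap
  apply Measurable.prodMk
  · exact measurable_pi_lambda
      (fun (p : (Fin k → α) × (Fin k → β)) (j : Fin n) => p.1 (Fin.castLE h j))
      fun j => (measurable_pi_apply (X := fun _ : Fin k => α) (Fin.castLE h j)).comp measurable_fst
  · exact measurable_pi_lambda
      (fun (p : (Fin k → α) × (Fin k → β)) (j : Fin n) => p.2 (Fin.castLE h j))
      fun j => (measurable_pi_apply (X := fun _ : Fin k => β) (Fin.castLE h j)).comp measurable_snd

lemma truncMap_resMap {n k : ℕ} (h : n ≤ k) :
    truncMap α β h ∘ resMap α β k = resMap α β n := rfl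

/-- The cylinder π-system on the path space. -/
def cylinders (α β : Type*) [MeasurableSpace α] [MeasurableSpace β] :
    Set (Set ((ℕ → α) × (ℕ → β))) :=
  {t | ∃ (n : ℕ) (E : Set ((Fin n → α) × (Fin n → β))), MeasurableSet E ∧
    t = resMap α β n ⁻¹' E}

lemma isPiSystem_cylinders : IsPiSystem (cylinders α β) := by
  rintro t ⟨n, E, hE, rfl⟩ t' ⟨m, F, hF, rfl⟩ -
  refine ⟨max n m, truncMap α β (le_max_left n m) ⁻¹' E ∩
    truncMap α β (le_max_right n m) ⁻¹' F,
    (measurable_truncMap _ hE).inter (measurable_truncMap _ hF), ?_⟩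
  rw [Set.preimage_inter, ← Set.preimage_comp, ← Set.preimage_comp,
    truncMap_resMap, truncMap_resMap]

lemma generateFrom_cylinders :
    (inferInstance : MeasurableSpace ((ℕ → α) × (ℕ → β))) =
      MeasurableSpace.generateFrom (cylinders α β) := by
  refine le_antisymm ?_ (MeasurableSpace.generateFrom_le ?_)
  · intro s hs
    have h1 : @Measurable _ _ (MeasurableSpace.generateFrom (cylinders α β)) _
        (fun q : (ℕ → α) × (ℕ → β) => q.1) := by
      refine measurable_pi_lambda' _ _ ?_
      intro j A hA
      apply MeasurableSpace.measurableSet_generateFrom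
      exact ⟨j + 1, Prod.fst ⁻¹' ((fun p : Fin (j + 1) → α => p ⟨j, Nat.lt_succ_self j⟩) ⁻¹' A),
        ((measurable_pi_apply _).comp measurable_fst) hA, rfl⟩
    have h2 : @Measurable _ _ (MeasurableSpace.generateFrom (cylinders α β)) _
        (fun q : (ℕ → α) × (ℕ → β) => q.2) := by
      refine measurable_pi_lambda' _ _ ?_
      intro j A hA
      apply MeasurableSpace.measurableSet_generateFrom
      exact ⟨j + 1, Prod.snd ⁻¹' ((fun p : Fin (j + 1) → β => p ⟨j, Nat.lt_succ_self j⟩) ⁻¹' A),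
        ((measurable_pi_apply _).comp measurable_snd) hA, rfl⟩
    have hid : @Measurable _ _ (MeasurableSpace.generateFrom (cylinders α β)) _
        (id : ((ℕ → α) × (ℕ → β)) → ((ℕ → α) × (ℕ → β))) := h1.prodMk h2
    exact hid hs
  · rintro t ⟨n, E, hE, rfl⟩
    exact measurable_resMap n hE

end PathSpace

section Tsirelson

variable {S : Type u} {G : Type v}
  [TopologicalSpace S] [CompactSpace S] [TopologicalSpace.MetrizableSpace S]
  [SecondCountableTopology S] [MeasurableSpace S] [BorelSpace S]
  [TopologicalSpace G] [CompactSpace G] [TopologicalSpace.MetrizableSpace G]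
  [SecondCountableTopology G] [MeasurableSpace G] [BorelSpace G]
  [Semigroup G] [ContinuousMul G]
  [SMul G S] [ContinuousSMul G S] [IsScalarTower G G S]

/-- Two solutions of Tsirelson's equation with the same noise law whose
one-dimensional marginals agree are identical in law. -/
theorem tsirelson_eq_in_law_of_marginals_eq
    {Ω : Type w} {Ω' : Type w₂} [MeasurableSpace Ω] [MeasurableSpace Ω']
    (P : Measure Ω) (P' : Measure Ω') [IsProbabilityMeasure P] [IsProbabilityMeasure P']
    (μ : ℕ → Measure G) (hμ : ∀ k, IsProbabilityMeasure (μ k))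
    (X : ℕ → Ω → S) (N : ℕ → Ω → G) (X' : ℕ → Ω' → S) (N' : ℕ → Ω' → G)
    (hsol : IsSolution P μ X N) (hsol' : IsSolution P' μ X' N')
    (hmarg : ∀ k, P.map (X k) = P'.map (X' k)) :
    jointLaw P X N = jointLaw P' X' N' := by
  haveI : ∀ k, IsProbabilityMeasure (μ k) := hμ
  have hdG : Nonempty G := by
    by_contra h
    rw [not_nonempty_iff] at h
    have h1 : (μ 0) Set.univ = 1 := measure_univ
    rw [Set.univ_eq_empty_iff.mpr h] at h1
    simp at h1
  obtain ⟨d⟩ := hdG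
  -- the joint laws of `(X_n, (N_0, …, N_{n-1}))` agree
  have hW : ∀ n, P.map (fun ω => (X n ω, fun i : Fin n => N i ω)) =
      P'.map (fun ω => (X' n ω, fun i : Fin n => N' i ω)) := by
    intro n
    induction n with
    | zero =>
      have e1 : (fun ω => (X 0 ω, fun i : Fin 0 => N i ω)) =
          (fun x : S => (x, fun i : Fin 0 => (i.elim0 : G))) ∘ X 0 :=
        funext fun ω => Prod.ext rfl (funext fun i => i.elim0)
      have e2 : (fun ω => (X' 0 ω, fun i : Fin 0 => N' i ω)) =
          (fun x : S => (x, fun i : Fin 0 => (i.elim0 : G))) ∘ X' 0 :=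
        funext fun ω => Prod.ext rfl (funext fun i => i.elim0)
      have hg : Measurable fun x : S => (x, fun i : Fin 0 => (i.elim0 : G)) :=
        measurable_id.prodMk measurable_const
      rw [e1, e2, ← Measure.map_map hg (hsol.measurable_X 0),
        ← Measure.map_map hg (hsol'.measurable_X 0), hmarg 0]
    | succ n ih =>
      have hNvec : P.map (fun ω (i : Fin n) => N i ω) =
          P'.map (fun ω (i : Fin n) => N' i ω) := by
        have e1 : (fun ω (i : Fin n) => N i ω) =
            Prod.snd ∘ (fun ω => (X n ω, fun i : Fin n => N i ω)) := rfl
        have e2 : (fun ω (i : Fin n) => N' i ω) =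
            Prod.snd ∘ (fun ω => (X' n ω, fun i : Fin n => N' i ω)) := rfl
        rw [e1, e2,
          ← Measure.map_map measurable_snd
            ((hsol.measurable_X n).prodMk (hsol.measurable_Nvec n)),
          ← Measure.map_map measurable_snd
            ((hsol'.measurable_X n).prodMk (hsol'.measurable_Nvec n)),
          ih]
      rw [hsol.law_W_succ n, hsol'.law_W_succ n, hmarg (n + 1), hNvec]
  -- the finite-dimensional joint laws of the paths agree
  have hWfull : ∀ n, P.map (fun ω => (fun j : Fin n => X j ω, fun j : Fin n => N j ω)) =
      P'.map (fun ω => (fun j : Fin n => X' j ω, fun j : Fin n => N' j ω)) := by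
    intro n
    rw [hsol.law_Wfull d n, hsol'.law_Wfull d n, hW n]
  have hpm : Measurable fun ω => (fun k => X k ω, fun k => N k ω) :=
    (measurable_pi_lambda _ fun j => hsol.measurable_X j).prodMk
      (measurable_pi_lambda _ fun j => hsol.measurable_N j)
  have hpm' : Measurable fun ω => (fun k => X' k ω, fun k => N' k ω) :=
    (measurable_pi_lambda _ fun j => hsol'.measurable_X j).prodMk
      (measurable_pi_lambda _ fun j => hsol'.measurable_N j)
  haveI : IsProbabilityMeasure (jointLaw P X N) := Measure.isProbabilityMeasure_map hpm.aemeasurable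
  refine MeasureTheory.ext_of_generate_finite (cylinders S G) generateFrom_cylinders
    isPiSystem_cylinders ?_ ?_
  · rintro t ⟨n, E, hE, rfl⟩
    have c1 : jointLaw P X N (resMap S G n ⁻¹' E) =
        P.map (fun ω => (fun j : Fin n => X j ω, fun j : Fin n => N j ω)) E := by
      rw [jointLaw, Measure.map_apply hpm ((measurable_resMap n) hE),
        ← Set.preimage_comp, ← Measure.map_apply ((measurable_resMap n).comp hpm) hE]
      rfl
    have c2 : jointLaw P' X' N' (resMap S G n ⁻¹' E) =
        P'.map (fun ω => (fun j : Fin n => X' j ω, fun j : Fin n => N' j ω)) E := by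
      rw [jointLaw, Measure.map_apply hpm' ((measurable_resMap n) hE),
        ← Set.preimage_comp, ← Measure.map_apply ((measurable_resMap n).comp hpm') hE]
      rfl
    rw [c1, c2, hWfull n]
  · rw [jointLaw, jointLaw, Measure.map_apply hpm MeasurableSet.univ,
      Measure.map_apply hpm' MeasurableSet.univ, Set.preimage_univ, Set.preimage_univ,
      measure_univ, measure_univ]

end Tsirelson
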